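/- Let φ be a positive long root, w ∈ W with wφ = θ minimal, and ŵ an element of the parabolic subgroup Ŵ_{⊥φ} of the affine Weyl group generated by those reflections s_i (i = 0,…,l, with α₀ = −θ) for which α_i ⊥ φ. Then s₀wŵρ − s₀wρ is perpendicular to the highest root θ. -/

import Mathlib

open scoped RealInnerProductSpace BigOperators

noncomputable section

variable (V : Type) [NormedAddCommGroup V] [InnerProductSpace ℝ V] [FiniteDimensional ℝ V]

/-- A finite, reduced, crystallographic root system in a Euclidean space `V`,
with a chosen set of positive roots and the corresponding simple roots. -/
structure RootSystemData where
  /-- the rank -/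
  l : ℕ
  /-- the simple roots -/
  simple : Fin l → V
  /-- the set of roots -/
  roots : Finset V
  /-- the set of positive roots -/
  pos : Finset V
  pos_subset : pos ⊆ roots
  simple_mem_pos : ∀ i, simple i ∈ pos
  simple_indep : LinearIndependent ℝ simple
  span_roots : Submodule.span ℝ (roots : Set V) = ⊤
  root_ne_zero : ∀ α ∈ roots, α ≠ 0
  neg_mem : ∀ α ∈ roots, -α ∈ roots
  pos_iff : ∀ α ∈ roots, (α ∈ pos ↔ -α ∉ pos)
  pos_combo : ∀ α ∈ pos, ∃ c : Fin l → ℕ, α = ∑ i, (c i : ℝ) • simple i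
  crystal : ∀ α ∈ roots, ∀ β ∈ roots, ∃ n : ℤ, 2 * ⟪β, α⟫ / ⟪α, α⟫ = (n : ℝ)
  reflect_mem : ∀ α ∈ roots, ∀ β ∈ roots, β - (2 * ⟪β, α⟫ / ⟪α, α⟫) • α ∈ roots
  sub_mem : ∀ α ∈ roots, ∀ β ∈ roots, 0 < ⟪α, β⟫ → α ≠ β → α - β ∈ roots
  reduced : ∀ α ∈ roots, ∀ c : ℝ, c • α ∈ roots → c = 1 ∨ c = -1

namespace RootSystemData

open Classical

variable {V}

/-- The pairing `⟨λ, α∨⟩ = 2(λ|α)/(α|α)` of a vector with the coroot of `α`. -/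
def pair (lam α : V) : ℝ := 2 * ⟪lam, α⟫ / ⟪α, α⟫

/-- The orthogonal reflection in the hyperplane orthogonal to `α`. -/
def sRefl (α : V) : V ≃ₗᵢ[ℝ] V := Submodule.reflection ((ℝ ∙ α)ᗮ)

variable (R : RootSystemData V)

/-- Half the sum of the positive roots. -/
def ρ : V := (2 : ℝ)⁻¹ • ∑ φ ∈ R.pos, φ

/-- The (finite) Weyl group, generated by the simple reflections. -/
def W : Subgroup (V ≃ₗᵢ[ℝ] V) :=
  Subgroup.closure (Set.range fun i => sRefl (R.simple i))

/-- The length of a Weyl group element: the minimal length of a word in the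
simple reflections expressing it. -/
def len (w : V ≃ₗᵢ[ℝ] V) : ℕ :=
  sInf {k : ℕ | ∃ f : Fin k → Fin R.l,
    w = (List.ofFn fun j => sRefl (R.simple (f j))).prod}

/-- The inversion set `Φ_w = Φ₊ ∩ wΦ₋`. -/
def inversions (w : V ≃ₗᵢ[ℝ] V) : Finset V :=
  R.pos.filter fun x => -(w.symm x) ∈ R.pos

end RootSystemData

/-- An irreducible root system, together with its highest root `θ`. -/
structure IrredRootSystemData extends RootSystemData V where
  /-- the highest root -/
  θ : V
  θ_mem_pos : θ ∈ pos
  θ_highest : ∀ φ ∈ pos, ∃ c : Fin l → ℕ, θ - φ = ∑ i, (c i : ℝ) • simple i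
  θ_long : ∀ φ ∈ roots, ‖φ‖ ≤ ‖θ‖
  θ_dominant : ∀ i, 0 ≤ ⟪θ, simple i⟫
  irreducible : ∀ s : Finset V, s ⊆ roots →
      (∀ α ∈ s, ∀ β ∈ roots, β ∉ s → ⟪α, β⟫ = 0) → s = ∅ ∨ s = roots

namespace IrredRootSystemData

variable {V} (R : IrredRootSystemData V)

/-- The affine functional `L(φ) = 2(θ−φ|ρ)/(θ|θ)`. -/
def L (φ : V) : ℝ := 2 * ⟪R.θ - φ, R.toRootSystemData.ρ⟫ / ⟪R.θ, R.θ⟫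

/-- A root is long if it has the same length as the highest root. -/
def IsLong (φ : V) : Prop := ‖φ‖ = ‖R.θ‖

/-- The dual Coxeter number `g = ⟨ρ, θ∨⟩ + 1`. -/
def dualCox : ℝ := RootSystemData.pair R.toRootSystemData.ρ R.θ + 1

/-- The affine reflection `s₀(λ) = λ − (⟨λ,θ∨⟩ − g)θ` (scaled so that `s₀ρ = ρ + θ`). -/
def s0 (lam : V) : V := lam - (RootSystemData.pair lam R.θ - R.dualCox) • R.θ

end IrredRootSystemData

namespace IrredRootSystemData

variable {V} (R : IrredRootSystemData V)

/-- A simple reflection, viewed as an affine transformation. -/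
def affSimple (i : Fin R.l) : V ≃ᵃ[ℝ] V :=
  (RootSystemData.sRefl (R.simple i)).toLinearEquiv.toAffineEquiv

/-- The affine reflection `s₀ : λ ↦ s_θ λ + gθ` as an affine transformation. -/
def affS0 : V ≃ᵃ[ℝ] V :=
  ((RootSystemData.sRefl R.θ).toLinearEquiv.toAffineEquiv).trans
    (AffineEquiv.constVAdd ℝ V (R.dualCox • R.θ))

/-- The subgroup `Ŵ_{⊥φ}` of the affine Weyl group generated by those `s_i`
(`i = 0, …, l`, with `α₀ = −θ`) for which `α_i ⊥ φ`. -/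
def affWperp (φ : V) : Subgroup (V ≃ᵃ[ℝ] V) :=
  Subgroup.closure ({e | ∃ i, ⟪R.simple i, φ⟫ = 0 ∧ e = R.affSimple i} ∪
    {e | ⟪R.θ, φ⟫ = 0 ∧ e = R.affS0})

/-- The subgroup `W_{⊥φ}` generated by the simple reflections `s_i` (`i ≥ 1`)
with `α_i ⊥ φ`, viewed inside the affine Weyl group. -/
def finWperp (φ : V) : Subgroup (V ≃ᵃ[ℝ] V) :=
  Subgroup.closure {e | ∃ i, ⟪R.simple i, φ⟫ = 0 ∧ e = R.affSimple i}

/-- The length of an element of the affine Weyl group: the minimal length of a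
word in the generators `s₀, s₁, …, s_l`. -/
def affLen (wh : V ≃ᵃ[ℝ] V) : ℕ :=
  sInf {k : ℕ | ∃ f : Fin k → (V ≃ᵃ[ℝ] V),
    (∀ j, f j ∈ Set.range R.affSimple ∪ {R.affS0}) ∧ wh = (List.ofFn f).prod}

end IrredRootSystemData

/-- Let `φ` be a positive long root, `w` the minimal-length Weyl group element
with `wφ = θ`, and `ŵ ∈ Ŵ_{⊥φ}`.  Then `s₀wŵρ − s₀wρ` is perpendicular to
the highest root `θ`. -/
theorem s0_w_what_rho_sub_perp_theta (R : IrredRootSystemData V) (φ : V)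
    (hφ : φ ∈ R.pos) (hlong : R.IsLong φ)
    (w : V ≃ₗᵢ[ℝ] V) (hwW : w ∈ R.W) (hwφ : w φ = R.θ)
    (hlen : (R.len w : ℝ) = R.L φ)
    (what : V ≃ᵃ[ℝ] V) (hwhat : what ∈ R.affWperp φ) :
    ⟪R.s0 (w (what R.ρ)) - R.s0 (w R.ρ), R.θ⟫ = 0 := by
  classical
  -- reflection in α⊥ preserves inner product with φ when α ⊥ φ
  have refl_inner : ∀ α : V, ⟪α, φ⟫ = 0 → ∀ lam : V,
      ⟪(RootSystemData.sRefl α) lam, φ⟫ = ⟪lam, φ⟫ := by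
    intro α hα lam
    have hφmem : φ ∈ (ℝ ∙ α)ᗮ :=
      Submodule.mem_orthogonal_singleton_iff_inner_right.mpr hα
    calc ⟪(RootSystemData.sRefl α) lam, φ⟫
        = ⟪(RootSystemData.sRefl α) lam, (RootSystemData.sRefl α) φ⟫ := by
          rw [RootSystemData.sRefl, Submodule.reflection_mem_subspace_eq_self hφmem]
      _ = ⟪lam, φ⟫ := LinearIsometryEquiv.inner_map_map _ _ _
  -- every element of affWperp φ preserves inner products with φ
  have key : ∀ lam : V, ⟪what lam, φ⟫ = ⟪lam, φ⟫ := by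
    refine Subgroup.closure_induction
      (p := fun e _ => ∀ lam : V, ⟪e lam, φ⟫ = ⟪lam, φ⟫) ?_ ?_ ?_ ?_ hwhat
    · rintro e (⟨i, hi, rfl⟩ | ⟨hθ, rfl⟩) lam
      · simpa [IrredRootSystemData.affSimple] using refl_inner _ hi lam
      · simp only [IrredRootSystemData.affS0, AffineEquiv.trans_apply,
          AffineEquiv.constVAdd_apply, vadd_eq_add,
          LinearEquiv.coe_toAffineEquiv, LinearIsometryEquiv.coe_toLinearEquiv]
        rw [inner_add_left, real_inner_smul_left, hθ, refl_inner _ hθ lam]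
        ring
    · intro lam; rfl
    · intro x y _ _ hx hy lam
      have : (x * y) lam = x (y lam) := rfl
      rw [this, hx, hy]
    · intro x _ hx lam
      have hxx : x (x⁻¹ lam) = lam := AffineEquiv.apply_symm_apply x lam
      conv_rhs => rw [← hxx]
      exact (hx _).symm
  -- hence ⟪w (what ρ), θ⟫ = ⟪w ρ, θ⟫
  have hab : ⟪w (what R.toRootSystemData.ρ), R.θ⟫ = ⟪w R.toRootSystemData.ρ, R.θ⟫ := by
    rw [← hwφ, LinearIsometryEquiv.inner_map_map, LinearIsometryEquiv.inner_map_map]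
    exact key _
  set a := w (what R.toRootSystemData.ρ)
  set b := w R.toRootSystemData.ρ
  simp only [IrredRootSystemData.s0, RootSystemData.pair]
  rw [inner_sub_left, inner_sub_left, inner_sub_left, real_inner_smul_left,
    real_inner_smul_left, hab]
  ring
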